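/- Infinite ε-synchronization strings exist: for every ε ∈ (0,1), if for every n ∈ ℕ there exists an ε-synchronization string of length n over a fixed finite alphabet Σ, then there exists an infinite string S over Σ such that every pair of adjacent finite intervals [i,j), [j,k) satisfies ED(S[i,j), S[j,k)) > (1-ε)(k-i). -/

import Mathlib

variable {α : Type*}

/-- Insertion-deletion edit distance. -/
def ED [DecidableEq α] : List α → List α → ℕ
  | [], ys => ys.length
  | _ :: xs, [] => xs.length + 1
  | x :: xs, y :: ys =>
    if x = y then ED xs ys
    else 1 + min (ED (x :: xs) ys) (ED xs (y :: ys))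
termination_by xs ys => xs.length + ys.length
decreasing_by all_goals (simp; try omega)

/-- Length of longest common subsequence. -/
def LCSlen [DecidableEq α] : List α → List α → ℕ
  | [], _ => 0
  | _ :: _, [] => 0
  | x :: xs, y :: ys =>
    if x = y then 1 + LCSlen xs ys
    else max (LCSlen (x :: xs) ys) (LCSlen xs (y :: ys))
termination_by xs ys => xs.length + ys.length
decreasing_by all_goals (simp; try omega)

/-- substring S[i, j) of an (infinite) string -/
def sub (S : ℕ → α) (i j : ℕ) : List α := (List.range' i (j - i)).map S

def IsSyncString [DecidableEq α] (ε : ℝ) (n : ℕ) (S : ℕ → α) : Prop :=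
  ∀ i j k : ℕ, i < j → j < k → k ≤ n →
    (1 - ε) * ((k : ℝ) - i) < ED (sub S i j) (sub S j k)

def ReachableR (c y : List α) (D G : ℝ) : Prop :=
  ∃ z : List α, z.Sublist c ∧ z.Sublist y ∧
    (c.length : ℝ) - z.length ≤ D ∧ (y.length : ℝ) - z.length ≤ G


lemma sub_congr {α : Type*} (S S' : ℕ → α) (i j k : ℕ) (hjk : j ≤ k)
    (hag : ∀ m < k, S m = S' m) : sub S i j = sub S' i j := by
  unfold sub
  apply List.map_congr_left
  intro a ha
  have := List.mem_range'.1 ha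
  exact hag a (by omega)

/-- extend a finite string by a default value -/
def extFun {σ : Type*} (d : σ) {n : ℕ} (v : Fin n → σ) : ℕ → σ :=
  fun m => if h : m < n then v ⟨m, h⟩ else d

open CategoryTheory Opposite in
/-- Existence of infinite ε-synchronization strings over a finite alphabet, given
ε-synchronization strings of every finite length. -/
theorem stmt14 {σ : Type*} [DecidableEq σ] [Fintype σ] (ε : ℝ)
    (hε0 : 0 < ε) (hε1 : ε < 1)
    (h : ∀ n : ℕ, ∃ S : ℕ → σ, IsSyncString ε n S) :
    ∃ S : ℕ → σ, ∀ i j k : ℕ, i < j → j < k →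
      (1 - ε) * ((k : ℝ) - i) < ED (sub S i j) (sub S j k) := by
  classical
  obtain ⟨S0, _⟩ := h 0
  have hne : Nonempty σ := ⟨S0 0⟩
  let d : σ := Classical.arbitrary σ
  -- the inverse system of finite sync strings
  let F : ℕᵒᵖ ⥤ Type _ :=
    { obj := fun n => {v : Fin n.unop → σ // IsSyncString ε n.unop (extFun d v)}
      map := fun {n m} f => TypeCat.ofHom fun v => ⟨fun i => v.1 ⟨i.1, lt_of_lt_of_le i.2 (leOfHom f.unop)⟩, by
        have hmn : m.unop ≤ n.unop := leOfHom f.unop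
        intro i j k hij hjk hk
        have hv := v.2 i j k hij hjk (le_trans hk hmn)
        have hag : ∀ a < m.unop,
            extFun d (fun i : Fin m.unop => v.1 ⟨i.1, lt_of_lt_of_le i.2 hmn⟩) a
              = extFun d v.1 a := by
          intro a ha
          simp [extFun, ha, lt_of_lt_of_le ha hmn]
        rw [sub_congr _ _ i j m.unop (le_of_lt (lt_of_lt_of_le hjk hk)) hag,
            sub_congr _ _ j k m.unop hk hag]
        exact hv⟩
      map_id := by intro n; rfl
      map_comp := by intro a b c f g; rfl }
  haveI : ∀ j : ℕᵒᵖ, Finite (F.obj j) := fun j => Subtype.finite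
  haveI : ∀ j : ℕᵒᵖ, Nonempty (F.obj j) := by
    intro j
    obtain ⟨S, hS⟩ := h j.unop
    refine ⟨⟨fun i => S i.1, ?_⟩⟩
    intro i j' k hij hjk hk
    have hag : ∀ a < j.unop, extFun d (fun i : Fin j.unop => S i.1) a = S a := by
      intro a ha; simp [extFun, ha]
    rw [sub_congr _ _ i j' j.unop (le_of_lt (lt_of_lt_of_le hjk hk)) hag,
        sub_congr _ _ j' k j.unop hk hag]
    exact hS i j' k hij hjk hk
  obtain ⟨u, hu⟩ := nonempty_sections_of_finite_inverse_system F
  refine ⟨fun m => (u (op (m + 1))).1 ⟨m, Nat.lt_succ_self m⟩, ?_⟩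
  have key : ∀ (n m : ℕ) (hm : m < n),
      (u (op (m + 1))).1 ⟨m, Nat.lt_succ_self m⟩ = (u (op n)).1 ⟨m, hm⟩ := by
    intro n m hm
    have hf : op n ⟶ op (m + 1) := (homOfLE (by omega : m + 1 ≤ n)).op
    have := hu hf
    rw [← this]
    rfl
  intro i j k hij hjk
  have hk := (u (op k)).2 i j k hij hjk le_rfl
  have hag : ∀ a < k,
      (u (op (a + 1))).1 ⟨a, Nat.lt_succ_self a⟩ = extFun d (u (op k)).1 a := by
    intro a ha
    rw [key k a ha]
    simp [extFun, ha]
  rw [sub_congr _ _ i j k (le_of_lt hjk) hag, sub_congr _ _ j k k le_rfl hag]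
  exact hk
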